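/- Let φ be a continuous function on [0,∞] which is convex on (0,∞), and define φ*(λ) := inf_{x ∈ [0,∞]} (xλ + φ(x) − φ(0)) for λ ∈ [0,∞]. Then for any real p > 1, ∫_0^∞ (−φ'(x))^p dx = −(p−1)p ∫_0^∞ λ^{p−2} φ*(λ) dλ. In particular ∫_0^∞ φ'(x)^2 dx = −2 ∫_0^∞ φ*(λ) dλ. -/

import Mathlib

open Set Filter MeasureTheory

/-- The transform of Legendre type: `φ*(λ) = inf_{x ∈ [0,∞]} (xλ + φ(x) − φ(0))`.
(For `λ ≥ 0` the contribution of the point `x = ∞` never goes below the infimum over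
`[0,∞)`, since `φ` is decreasing towards its limit at `∞`; so the infimum over `[0,∞]`
coincides with the infimum over `[0,∞)`.) -/
noncomputable def legendreStar (φ : ℝ → ℝ) (lam : ℝ) : ℝ :=
  sInf ((fun x => x * lam + φ x - φ 0) '' Set.Ici 0)

open scoped ENNReal

section
variable {φ : ℝ → ℝ} {φtop : ℝ} {φ' : ℝ → ℝ}

section
variable {φ : ℝ → ℝ} {φtop : ℝ}

lemma rderiv_exists (hconv : ConvexOn ℝ (Set.Ioi 0) φ) {x : ℝ} (hx : 0 < x) :
    HasDerivWithinAt φ (sInf (slope φ x '' Ioi x)) (Ioi x) x := by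
  rw [hasDerivWithinAt_iff_tendsto_slope, Set.diff_singleton_eq_self (notMem_Ioi.2 le_rfl)]
  have hmono : MonotoneOn (slope φ x) (Ioi x) := by
    have := hconv.slope_mono (Set.mem_Ioi.2 hx)
    exact this.mono (fun y hy => ⟨lt_trans hx hy, ne_of_gt hy⟩)
  have hbdd : BddBelow (slope φ x '' Ioi x) := by
    refine ⟨slope φ x (x/2), ?_⟩
    rintro - ⟨y, hy, rfl⟩
    have h2 : (x/2) ∈ Ioi 0 \ {x} := ⟨by simpa using half_pos hx, by simp [ne_of_lt (half_lt_self hx)]⟩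
    have hy' : y ∈ Ioi 0 \ {x} := ⟨lt_trans hx hy, ne_of_gt hy⟩
    exact hconv.slope_mono (Set.mem_Ioi.2 hx) h2 hy' (le_of_lt (lt_trans (half_lt_self hx) hy))
  exact hmono.tendsto_nhdsGT hbdd

variable {φ' : ℝ → ℝ}

lemma rderiv_hasDeriv (hconv : ConvexOn ℝ (Set.Ioi 0) φ)
    (hφ' : ∀ t ∈ Set.Ioi (0 : ℝ), φ' t = derivWithin φ (Set.Ioi t) t)
    {x : ℝ} (hx : 0 < x) : HasDerivWithinAt φ (φ' x) (Ioi x) x := by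
  have h := rderiv_exists hconv hx
  have := h.derivWithin (uniqueDiffWithinAt_Ioi x)
  rw [hφ' x hx, this]
  exact h

lemma rderiv_eq_sInf (hconv : ConvexOn ℝ (Set.Ioi 0) φ)
    (hφ' : ∀ t ∈ Set.Ioi (0 : ℝ), φ' t = derivWithin φ (Set.Ioi t) t)
    {x : ℝ} (hx : 0 < x) : φ' x = sInf (slope φ x '' Ioi x) := by
  rw [hφ' x hx, (rderiv_exists hconv hx).derivWithin (uniqueDiffWithinAt_Ioi x)]

lemma rderiv_le_slope (hconv : ConvexOn ℝ (Set.Ioi 0) φ)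
    (hφ' : ∀ t ∈ Set.Ioi (0 : ℝ), φ' t = derivWithin φ (Set.Ioi t) t)
    {x y : ℝ} (hx : 0 < x) (hxy : x < y) : φ' x ≤ slope φ x y := by
  rw [rderiv_eq_sInf hconv hφ' hx]
  have hbdd : BddBelow (slope φ x '' Ioi x) := by
    refine ⟨slope φ x (x/2), ?_⟩
    rintro - ⟨z, hz, rfl⟩
    have h2 : (x/2) ∈ Ioi 0 \ {x} := ⟨by simpa using half_pos hx, by simp [ne_of_lt (half_lt_self hx)]⟩
    have hz' : z ∈ Ioi 0 \ {x} := ⟨lt_trans hx hz, ne_of_gt hz⟩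
    exact hconv.slope_mono (Set.mem_Ioi.2 hx) h2 hz' (le_of_lt (lt_trans (half_lt_self hx) hz))
  exact csInf_le hbdd ⟨y, hxy, rfl⟩

lemma slope_le_rderiv (hconv : ConvexOn ℝ (Set.Ioi 0) φ)
    (hφ' : ∀ t ∈ Set.Ioi (0 : ℝ), φ' t = derivWithin φ (Set.Ioi t) t)
    {x y : ℝ} (hx : 0 < x) (hxy : x < y) : slope φ x y ≤ φ' y := by
  rw [rderiv_eq_sInf hconv hφ' (lt_trans hx hxy)]
  refine le_csInf ⟨slope φ y (y+1), ⟨y+1, by simp, rfl⟩⟩ ?_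
  rintro - ⟨z, hz, rfl⟩
  rw [slope_comm]
  have hx' : x ∈ Ioi 0 \ {y} := ⟨hx, ne_of_lt hxy⟩
  have hz' : z ∈ Ioi 0 \ {y} := ⟨lt_trans (lt_trans hx hxy) hz, ne_of_gt hz⟩
  exact hconv.slope_mono (Set.mem_Ioi.2 (lt_trans hx hxy)) hx' hz' (le_of_lt (lt_trans hxy hz))

lemma rderiv_mono (hconv : ConvexOn ℝ (Set.Ioi 0) φ)
    (hφ' : ∀ t ∈ Set.Ioi (0 : ℝ), φ' t = derivWithin φ (Set.Ioi t) t) :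
    MonotoneOn φ' (Ioi 0) := by
  rintro x hx y hy hxy
  rcases eq_or_lt_of_le hxy with rfl | h
  · exact le_rfl
  · exact le_trans (rderiv_le_slope hconv hφ' hx h) (slope_le_rderiv hconv hφ' hx h)

lemma rderiv_nonpos (hconv : ConvexOn ℝ (Set.Ioi 0) φ)
    (htop : Filter.Tendsto φ Filter.atTop (nhds φtop))
    (hφ' : ∀ t ∈ Set.Ioi (0 : ℝ), φ' t = derivWithin φ (Set.Ioi t) t)
    {x : ℝ} (hx : 0 < x) : φ' x ≤ 0 := by
  have hlim : Tendsto (fun y => slope φ x y) atTop (nhds 0) := by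
    have h1 : Tendsto (fun y => φ y - φ x) atTop (nhds (φtop - φ x)) := htop.sub_const _
    have h2 : Tendsto (fun y : ℝ => (y - x)⁻¹) atTop (nhds 0) :=
      (tendsto_atTop_add_const_right _ (-x) tendsto_id).inv_tendsto_atTop
    have := h1.mul h2
    simp only [mul_zero] at this
    refine this.congr (fun y => ?_)
    simp [slope_def_field, div_eq_mul_inv, mul_comm]
  exact ge_of_tendsto hlim (eventually_atTop.2 ⟨x+1, fun y hy =>
    rderiv_le_slope hconv hφ' hx (by linarith)⟩)






lemma rderiv_intervalIntegrable (hconv : ConvexOn ℝ (Set.Ioi 0) φ)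
    (hφ' : ∀ t ∈ Set.Ioi (0 : ℝ), φ' t = derivWithin φ (Set.Ioi t) t)
    {a b : ℝ} (ha : 0 < a) (hab : a ≤ b) : IntervalIntegrable φ' volume a b := by
  have : MonotoneOn φ' (uIcc a b) := by
    apply (rderiv_mono hconv hφ').mono
    rw [uIcc_of_le hab]
    exact fun t ht => lt_of_lt_of_le ha ht.1
  exact this.intervalIntegrable

lemma rderiv_ftc (hc : ContinuousOn φ (Set.Ici 0)) (hconv : ConvexOn ℝ (Set.Ioi 0) φ)
    (hφ' : ∀ t ∈ Set.Ioi (0 : ℝ), φ' t = derivWithin φ (Set.Ioi t) t)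
    {a b : ℝ} (ha : 0 < a) (hab : a ≤ b) :
    ∫ t in a..b, φ' t = φ b - φ a := by
  refine intervalIntegral.integral_eq_sub_of_hasDeriv_right_of_le hab
    (hc.mono (fun t ht => le_trans ha.le ht.1))
    (fun x hx => rderiv_hasDeriv hconv hφ' (lt_trans ha hx.1))
    (rderiv_intervalIntegrable hconv hφ' ha hab)

-- claim1 : on intervals where -φ' ≤ lam, g increasing
lemma claim1 (hc : ContinuousOn φ (Set.Ici 0)) (hconv : ConvexOn ℝ (Set.Ioi 0) φ)
    (hφ' : ∀ t ∈ Set.Ioi (0 : ℝ), φ' t = derivWithin φ (Set.Ioi t) t)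
    {lam a b : ℝ} (ha : 0 < a) (hab : a ≤ b) (h : ∀ t ∈ Ioo a b, -φ' t ≤ lam) :
    a * lam + φ a ≤ b * lam + φ b := by
  have hint := rderiv_intervalIntegrable hconv hφ' ha hab
  have h0 : (0:ℝ) ≤ ∫ t in a..b, (lam + φ' t) := by
    apply intervalIntegral.integral_nonneg_of_ae_restrict hab
    have : ∀ᵐ t ∂(volume.restrict (Icc a b)), t ∈ Ioo a b → 0 ≤ lam + φ' t := by
      refine ae_of_all _ (fun t ht => by linarith [h t ht])
    have hIoo : ∀ᵐ t ∂(volume.restrict (Icc a b)), t ∈ Ioo a b := by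
      rw [ae_restrict_iff' measurableSet_Icc, ae_iff]
      refine measure_mono_null (fun t ht => ?_) (((Set.countable_singleton b).insert a).measure_zero volume)
      simp only [mem_setOf_eq, _root_.not_imp, mem_Icc, mem_Ioo, not_and_or, not_lt] at ht
      rcases ht.2 with h1 | h1
      · exact Or.inl (le_antisymm h1 ht.1.1)
      · exact Or.inr (le_antisymm ht.1.2 h1)
    filter_upwards [this, hIoo] with t h1 h2 using h1 h2
  have heq : ∫ t in a..b, (lam + φ' t) = lam * (b - a) + (φ b - φ a) := by
    rw [intervalIntegral.integral_add (intervalIntegrable_const) hint,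
      intervalIntegral.integral_const, rderiv_ftc hc hconv hφ' ha hab]
    simp [smul_eq_mul, mul_comm]
  nlinarith [h0, heq]

lemma ae_Ioc_mem_Ioo {a b : ℝ} :
    ∀ᵐ t ∂(volume.restrict (Ioc a b)), t ∈ Ioo a b := by
  rw [ae_restrict_iff' measurableSet_Ioc, ae_iff]
  refine measure_mono_null (fun t ht => ?_) (measure_singleton (b : ℝ))
  simp only [mem_setOf_eq, _root_.not_imp, mem_Ioc, mem_Ioo, not_and_or, not_lt] at ht
  rcases ht.2 with h1 | h1
  · exact absurd ht.1.1 (not_lt.2 h1)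
  · exact le_antisymm ht.1.2 h1

lemma claim2 (hc : ContinuousOn φ (Set.Ici 0)) (hconv : ConvexOn ℝ (Set.Ioi 0) φ)
    (hφ' : ∀ t ∈ Set.Ioi (0 : ℝ), φ' t = derivWithin φ (Set.Ioi t) t)
    {lam a b : ℝ} (ha : 0 < a) (hab : a ≤ b) (h : ∀ t ∈ Ioo a b, lam ≤ -φ' t) :
    b * lam + φ b ≤ a * lam + φ a := by
  have hint := rderiv_intervalIntegrable hconv hφ' ha hab
  have h0 : (0:ℝ) ≤ ∫ t in a..b, (-φ' t - lam) := by
    apply intervalIntegral.integral_nonneg_of_ae_restrict hab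
    have hIoo : ∀ᵐ t ∂(volume.restrict (Icc a b)), t ∈ Ioo a b := by
      rw [ae_restrict_iff' measurableSet_Icc, ae_iff]
      refine measure_mono_null (fun t ht => ?_) (((Set.countable_singleton b).insert a).measure_zero volume)
      simp only [mem_setOf_eq, _root_.not_imp, mem_Icc, mem_Ioo, not_and_or, not_lt] at ht
      rcases ht.2 with h1 | h1
      · exact Or.inl (le_antisymm h1 ht.1.1)
      · exact Or.inr (le_antisymm ht.1.2 h1)
    filter_upwards [hIoo] with t h2
    simp only [Pi.zero_apply]
    linarith [h t h2]
  have hneg : IntervalIntegrable (fun t => -φ' t) volume a b := hint.neg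
  have heq : ∫ t in a..b, (-φ' t - lam) = (φ a - φ b) - lam * (b - a) := by
    rw [intervalIntegral.integral_sub hneg intervalIntegrable_const,
      intervalIntegral.integral_neg, rderiv_ftc hc hconv hφ' ha hab,
      intervalIntegral.integral_const]
    simp [smul_eq_mul, mul_comm]
  nlinarith [h0, heq]

lemma step2 (hc : ContinuousOn φ (Set.Ici 0)) (hconv : ConvexOn ℝ (Set.Ioi 0) φ)
    (hφ' : ∀ t ∈ Set.Ioi (0 : ℝ), φ' t = derivWithin φ (Set.Ioi t) t)
    {lam a b : ℝ} (ha : 0 < a) (hab : a ≤ b) (h : ∀ t ∈ Ioo a b, lam ≤ -φ' t) :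
    ∫⁻ t in Ioc a b, ENNReal.ofReal (-φ' t - lam)
      = ENNReal.ofReal (φ a - φ b - lam * (b - a)) := by
  have hint := rderiv_intervalIntegrable hconv hφ' ha hab
  have hint' : IntegrableOn (fun t => -φ' t - lam) (Ioc a b) := by
    rw [← intervalIntegrable_iff_integrableOn_Ioc_of_le hab]
    exact hint.neg.sub intervalIntegrable_const
  have hnn : 0 ≤ᵐ[volume.restrict (Ioc a b)] (fun t => -φ' t - lam) := by
    filter_upwards [ae_Ioc_mem_Ioo (a := a) (b := b)] with t ht
    simp only [Pi.zero_apply]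
    linarith [h t ht]
  have hneg : IntervalIntegrable (fun t => -φ' t) volume a b := hint.neg
  have := ofReal_integral_eq_lintegral_ofReal hint' hnn
  rw [← this, ← intervalIntegral.integral_of_le hab]
  congr 1
  rw [intervalIntegral.integral_sub hneg intervalIntegrable_const,
    intervalIntegral.integral_neg, rderiv_ftc hc hconv hφ' ha hab,
    intervalIntegral.integral_const]
  simp only [smul_eq_mul]
  ring
lemma step3 (hc : ContinuousOn φ (Set.Ici 0)) (hconv : ConvexOn ℝ (Set.Ioi 0) φ)
    (hφ' : ∀ t ∈ Set.Ioi (0 : ℝ), φ' t = derivWithin φ (Set.Ioi t) t)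
    {lam b : ℝ} (hb : 0 < b) (h : ∀ t ∈ Ioo (0:ℝ) b, lam ≤ -φ' t) :
    ∫⁻ t in Ioc 0 b, ENNReal.ofReal (-φ' t - lam)
      = ENNReal.ofReal (φ 0 - φ b - lam * b) := by
  set u : ℕ → ℝ := fun n => b / (n + 1) with hu_def
  have hu_pos : ∀ n, 0 < u n := fun n => div_pos hb (by positivity)
  have hu_le : ∀ n, u n ≤ b := fun n => by
    rw [hu_def]
    have h1 : (1:ℝ) ≤ (n:ℝ) + 1 := by have := Nat.cast_nonneg (α := ℝ) n; linarith
    calc b / ((n:ℝ) + 1) ≤ b / 1 := by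
          apply div_le_div_of_nonneg_left hb.le one_pos h1
    _ = b := div_one b
  have hu_anti : ∀ {n m : ℕ}, n ≤ m → u m ≤ u n := by
    intro n m hnm
    apply div_le_div_of_nonneg_left hb.le (by positivity)
    exact_mod_cast by exact_mod_cast add_le_add_left (Nat.cast_le.2 hnm) 1
  have hUn : Ioc (0:ℝ) b = ⋃ n : ℕ, Ioc (u n) b := by
    ext t
    simp only [mem_iUnion, mem_Ioc]
    constructor
    · rintro ⟨ht0, htb⟩
      obtain ⟨n, hn⟩ := exists_nat_gt (b / t)
      refine ⟨n, ?_, htb⟩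
      rw [div_lt_iff₀ (by positivity)]
      have : b < n * t := (div_lt_iff₀ ht0).1 hn
      nlinarith
    · rintro ⟨n, hn, htb⟩
      exact ⟨lt_trans (hu_pos n) hn, htb⟩
  have hdir : Directed (· ⊆ ·) (fun n : ℕ => Ioc (u n) b) := by
    refine Monotone.directed_le (fun n m hnm => Ioc_subset_Ioc_left (hu_anti hnm))
  rw [hUn, setLIntegral_iUnion_of_directed _ hdir]
  have hAn : ∀ n : ℕ, ∫⁻ t in Ioc (u n) b, ENNReal.ofReal (-φ' t - lam)
      = ENNReal.ofReal (φ (u n) - φ b - lam * (b - u n)) := by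
    intro n
    exact step2 hc hconv hφ' (hu_pos n) (hu_le n)
      (fun t ht => h t ⟨lt_trans (hu_pos n) ht.1, ht.2⟩)
  have hmono : Monotone (fun n : ℕ => ∫⁻ t in Ioc (u n) b, ENNReal.ofReal (-φ' t - lam)) := by
    intro n m hnm
    exact lintegral_mono' (Measure.restrict_mono (Ioc_subset_Ioc_left (hu_anti hnm)) le_rfl) le_rfl
  have hu_tendsto : Tendsto u atTop (nhds 0) := by
    rw [hu_def]
    have := (tendsto_const_div_atTop_nhds_zero_nat b).comp (tendsto_add_atTop_nat 1)
    refine this.congr (fun n => ?_)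
    simp only [Function.comp]
    push_cast
    ring_nf
  have hφu : Tendsto (fun n => φ (u n)) atTop (nhds (φ 0)) := by
    have hcw : ContinuousWithinAt φ (Ici 0) 0 := hc 0 self_mem_Ici
    apply hcw.tendsto.comp
    rw [tendsto_nhdsWithin_iff]
    exact ⟨hu_tendsto, Eventually.of_forall (fun n => (hu_pos n).le)⟩
  have hc_tendsto : Tendsto (fun n => ENNReal.ofReal (φ (u n) - φ b - lam * (b - u n)))
      atTop (nhds (ENNReal.ofReal (φ 0 - φ b - lam * b))) := by
    apply (ENNReal.continuous_ofReal.tendsto _).comp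
    have : Tendsto (fun n => φ (u n) - φ b - lam * (b - u n)) atTop
        (nhds (φ 0 - φ b - lam * (b - 0))) :=
      ((hφu.sub_const (φ b)).sub (((tendsto_const_nhds.sub hu_tendsto)).const_mul lam))
    simpa using this
  have htend : Tendsto (fun n : ℕ => ∫⁻ t in Ioc (u n) b, ENNReal.ofReal (-φ' t - lam))
      atTop (nhds (ENNReal.ofReal (φ 0 - φ b - lam * b))) := by
    simp only [hAn]
    exact hc_tendsto
  exact tendsto_nhds_unique (tendsto_atTop_iSup hmono) htend


lemma phi_anti (hc : ContinuousOn φ (Set.Ici 0)) (hconv : ConvexOn ℝ (Set.Ioi 0) φ)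
    (htop : Filter.Tendsto φ Filter.atTop (nhds φtop))
    (hφ' : ∀ t ∈ Set.Ioi (0 : ℝ), φ' t = derivWithin φ (Set.Ioi t) t) :
    AntitoneOn φ (Ici 0) := by
  have key : ∀ x y : ℝ, 0 < x → x < y → φ y ≤ φ x := by
    intro x y hx hxy
    have h1 : slope φ x y ≤ φ' y := slope_le_rderiv hconv hφ' hx hxy
    have h2 : φ' y ≤ 0 := rderiv_nonpos hconv htop hφ' (lt_trans hx hxy)
    have h3 : slope φ x y = (φ y - φ x) / (y - x) := by rw [slope_def_field]
    have h4 : (φ y - φ x) / (y - x) ≤ 0 := by rw [← h3]; linarith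
    have h5 : 0 < y - x := by linarith
    have h6 : φ y - φ x = (φ y - φ x) / (y - x) * (y - x) := (div_mul_cancel₀ _ (ne_of_gt h5)).symm
    nlinarith
  intro x hx y hy hxy
  rcases eq_or_lt_of_le hxy with rfl | hlt
  · exact le_rfl
  rcases eq_or_lt_of_le (show (0:ℝ) ≤ x from hx) with rfl | hx0
  · -- x = 0
    have hev : ∀ᶠ a in nhdsWithin 0 (Ioi (0:ℝ)), φ y ≤ φ a := by
      filter_upwards [Ioo_mem_nhdsGT_of_mem (Set.mem_Ico.2 ⟨le_rfl, hlt⟩)] with a ha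
      exact key a y ha.1 ha.2
    have hten : Tendsto φ (nhdsWithin 0 (Ioi (0:ℝ))) (nhds (φ 0)) :=
      (hc 0 self_mem_Ici).tendsto.mono_left (nhdsWithin_mono 0 Ioi_subset_Ici_self)
    exact ge_of_tendsto hten hev
  · exact key x y hx0 hlt

lemma phitop_le (hc : ContinuousOn φ (Set.Ici 0)) (hconv : ConvexOn ℝ (Set.Ioi 0) φ)
    (htop : Filter.Tendsto φ Filter.atTop (nhds φtop))
    (hφ' : ∀ t ∈ Set.Ioi (0 : ℝ), φ' t = derivWithin φ (Set.Ioi t) t)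
    {x : ℝ} (hx : 0 ≤ x) : φtop ≤ φ x := by
  refine le_of_tendsto htop (eventually_atTop.2 ⟨max x 0, fun y hy => ?_⟩)
  exact phi_anti hc hconv htop hφ' hx (le_trans (le_max_right x 0) hy) (le_trans (le_max_left x 0) hy)

lemma legendre_le_zero (hc : ContinuousOn φ (Set.Ici 0)) (hconv : ConvexOn ℝ (Set.Ioi 0) φ)
    (htop : Filter.Tendsto φ Filter.atTop (nhds φtop))
    (hφ' : ∀ t ∈ Set.Ioi (0 : ℝ), φ' t = derivWithin φ (Set.Ioi t) t)
    {lam : ℝ} (hlam : 0 ≤ lam) : legendreStar φ lam ≤ 0 := by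
  have hbdd : BddBelow ((fun x => x * lam + φ x - φ 0) '' Set.Ici 0) := by
    refine ⟨φtop - φ 0, ?_⟩
    rintro - ⟨x, hx, rfl⟩
    have h1 : φtop ≤ φ x := phitop_le hc hconv htop hφ' hx
    have h2 : 0 ≤ x * lam := mul_nonneg hx hlam
    simp only; linarith
  have : (0:ℝ) ∈ (fun x => x * lam + φ x - φ 0) '' Set.Ici 0 :=
    ⟨0, self_mem_Ici, by simp⟩
  exact csInf_le hbdd this

lemma legendre_rep (hc : ContinuousOn φ (Set.Ici 0)) (hconv : ConvexOn ℝ (Set.Ioi 0) φ)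
    (htop : Filter.Tendsto φ Filter.atTop (nhds φtop))
    (hφ' : ∀ t ∈ Set.Ioi (0 : ℝ), φ' t = derivWithin φ (Set.Ioi t) t)
    {lam : ℝ} (hlam : 0 < lam) :
    ENNReal.ofReal (-legendreStar φ lam) = ∫⁻ t in Ioi 0, ENNReal.ofReal (-φ' t - lam) := by
  classical
  set S : Set ℝ := {t : ℝ | 0 < t ∧ -φ' t ≤ lam} with hS_def
  have hS_ne : S.Nonempty := by
    by_contra hS
    rw [Set.not_nonempty_iff_eq_empty, Set.eq_empty_iff_forall_notMem] at hS
    have hall : ∀ t : ℝ, 0 < t → lam < -φ' t := by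
      intro t ht
      by_contra hle
      exact (hS t) ⟨ht, le_of_not_gt hle⟩
    set b := max 1 ((lam + φ 1 - φtop) / lam + 1) with hb_def
    have hb1 : (1:ℝ) ≤ b := le_max_left _ _
    have hkey : b * lam + φ b ≤ 1 * lam + φ 1 :=
      claim2 hc hconv hφ' one_pos hb1 (fun t ht => (hall t (lt_trans one_pos ht.1)).le)
    have htb : φtop ≤ φ b := phitop_le hc hconv htop hφ' (by linarith)
    have hb2 : (lam + φ 1 - φtop) / lam + 1 ≤ b := le_max_right _ _
    have : (lam + φ 1 - φtop) ≤ (b - 1) * lam := by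
      rw [div_add' _ _ _ (ne_of_gt hlam)] at hb2
      have := (div_le_iff₀ hlam).1 hb2
      nlinarith
    nlinarith
  have hS_bdd : BddBelow S := ⟨0, fun t ht => ht.1.le⟩
  set x₀ := sInf S with hx₀_def
  have hx₀0 : 0 ≤ x₀ := le_csInf hS_ne (fun t ht => ht.1.le)
  have hafter : ∀ t : ℝ, x₀ < t → -φ' t ≤ lam := by
    intro t ht
    obtain ⟨s, hs, hst⟩ := (csInf_lt_iff hS_bdd hS_ne).1 ht
    have := rderiv_mono hconv hφ' (Set.mem_Ioi.2 hs.1)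
      (Set.mem_Ioi.2 (lt_trans hs.1 hst)) hst.le
    linarith [hs.2]
  have hbefore : ∀ t : ℝ, 0 < t → t < x₀ → lam ≤ -φ' t := by
    intro t ht htx
    by_contra hle
    exact (notMem_of_lt_csInf htx hS_bdd) ⟨ht, (not_le.1 hle).le⟩
  -- inf is attained at x₀
  have hg_cont : Tendsto (fun a => a * lam + φ a) (nhdsWithin 0 (Ioi (0:ℝ))) (nhds (φ 0)) := by
    have h1 : ContinuousWithinAt (fun a => a * lam + φ a) (Ici 0) 0 :=
      ((continuousWithinAt_id.mul continuousWithinAt_const).add (hc 0 self_mem_Ici))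
    have := h1.tendsto.mono_left (nhdsWithin_mono 0 Ioi_subset_Ici_self)
    simpa using this
  have hattain : legendreStar φ lam = x₀ * lam + φ x₀ - φ 0 := by
    apply le_antisymm
    · apply csInf_le
      · refine ⟨φtop - φ 0, ?_⟩
        rintro - ⟨x, hx, rfl⟩
        have h1 : φtop ≤ φ x := phitop_le hc hconv htop hφ' hx
        have h2 : 0 ≤ x * lam := mul_nonneg hx hlam.le
        simp only; linarith
      · exact ⟨x₀, hx₀0, rfl⟩
    · refine le_csInf ⟨_, ⟨0, self_mem_Ici, rfl⟩⟩ ?_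
      rintro - ⟨x, hx, rfl⟩
      simp only
      have main : x₀ * lam + φ x₀ ≤ x * lam + φ x := by
        rcases le_or_gt x₀ x with hx0x | hxx0
        · -- x₀ ≤ x : g increasing on [x₀, x]
          rcases eq_or_lt_of_le hx0x with rfl | hlt
          · exact le_rfl
          rcases eq_or_lt_of_le hx₀0 with h0 | h0
          · -- x₀ = 0
            have hev : ∀ᶠ a in nhdsWithin 0 (Ioi (0:ℝ)), a * lam + φ a ≤ x * lam + φ x := by
              filter_upwards [Ioo_mem_nhdsGT_of_mem (Set.mem_Ico.2 ⟨le_rfl, h0 ▸ hlt⟩)] with a ha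
              exact claim1 hc hconv hφ' ha.1 ha.2.le
                (fun t ht => hafter t (by rw [← h0]; exact lt_trans ha.1 ht.1))
            have := le_of_tendsto hg_cont hev
            rw [← h0]; simpa using this
          · exact claim1 hc hconv hφ' h0 hlt.le (fun t ht => hafter t ht.1)
        · -- x < x₀ : g decreasing on [x, x₀]
          rcases eq_or_lt_of_le (show (0:ℝ) ≤ x from hx) with h0 | h0
          · -- x = 0
            have hev : ∀ᶠ a in nhdsWithin 0 (Ioi (0:ℝ)), x₀ * lam + φ x₀ ≤ a * lam + φ a := by
              filter_upwards [Ioo_mem_nhdsGT_of_mem (Set.mem_Ico.2 ⟨le_rfl, h0 ▸ hxx0⟩)] with a ha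
              exact claim2 hc hconv hφ' ha.1 ha.2.le
                (fun t ht => hbefore t (lt_trans ha.1 ht.1) ht.2)
            have := ge_of_tendsto hg_cont hev
            rw [← h0]; simpa using this
          · exact claim2 hc hconv hφ' h0 hxx0.le
              (fun t ht => hbefore t (lt_trans h0 ht.1) ht.2)
      linarith
  -- now compute the lintegral
  have hsplit : (Ioi (0:ℝ)) = Ioc 0 x₀ ∪ Ioi x₀ := (Ioc_union_Ioi_eq_Ioi hx₀0).symm
  have htail : ∫⁻ t in Ioi x₀, ENNReal.ofReal (-φ' t - lam) = 0 := by
    have : ∀ t ∈ Ioi x₀, ENNReal.ofReal (-φ' t - lam) = 0 := by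
      intro t ht
      exact ENNReal.ofReal_eq_zero.2 (by linarith [hafter t ht])
    rw [← lintegral_zero (μ := volume.restrict (Ioi x₀))]
    exact setLIntegral_congr_fun measurableSet_Ioi this
  have hmain : ∫⁻ t in Ioc 0 x₀, ENNReal.ofReal (-φ' t - lam)
      = ENNReal.ofReal (φ 0 - φ x₀ - lam * x₀) := by
    rcases eq_or_lt_of_le hx₀0 with h0 | h0
    · rw [← h0]
      simp
    · exact step3 hc hconv hφ' h0 (fun t ht => hbefore t ht.1 ht.2)
  rw [hsplit, lintegral_union measurableSet_Ioi (Set.Ioc_disjoint_Ioi le_rfl), htail, add_zero,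
    hmain, hattain]
  congr 1
  ring

end


lemma lemK {p : ℝ} (hp : 1 < p) {a : ℝ} (ha : 0 ≤ a) :
    ∫⁻ l in Ioi (0:ℝ), ENNReal.ofReal (l ^ (p-2)) * ENNReal.ofReal (a - l)
      = ENNReal.ofReal (a ^ p / ((p-1)*p)) := by
  rcases eq_or_lt_of_le ha with rfl | ha0
  · have hz : ∀ l ∈ Ioi (0:ℝ), ENNReal.ofReal (l ^ (p-2)) * ENNReal.ofReal ((0:ℝ) - l) = 0 := by
      intro l hl
      rw [ENNReal.ofReal_eq_zero.2 (by simp only [zero_sub]; linarith [mem_Ioi.1 hl] : (0:ℝ) - l ≤ 0), mul_zero]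
    rw [Real.zero_rpow (by linarith : p ≠ 0), zero_div, ENNReal.ofReal_zero,
      ← lintegral_zero (μ := volume.restrict (Ioi (0:ℝ)))]
    exact setLIntegral_congr_fun measurableSet_Ioi hz
  · have hsplit : (Ioi (0:ℝ)) = Ioc 0 a ∪ Ioi a := (Ioc_union_Ioi_eq_Ioi ha).symm
    have htail : ∫⁻ l in Ioi a, ENNReal.ofReal (l ^ (p-2)) * ENNReal.ofReal (a - l) = 0 := by
      have hz : ∀ l ∈ Ioi a, ENNReal.ofReal (l ^ (p-2)) * ENNReal.ofReal (a - l) = 0 := by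
        intro l hl
        rw [ENNReal.ofReal_eq_zero.2 (by linarith [mem_Ioi.1 hl] : a - l ≤ 0), mul_zero]
      rw [← lintegral_zero (μ := volume.restrict (Ioi a))]
      exact setLIntegral_congr_fun measurableSet_Ioi hz
    have hcong : ∀ l ∈ Ioc (0:ℝ) a, ENNReal.ofReal (l ^ (p-2)) * ENNReal.ofReal (a - l)
        = ENNReal.ofReal (l ^ (p-2) * (a - l)) := by
      intro l hl
      rw [ENNReal.ofReal_mul (Real.rpow_nonneg hl.1.le _)]
    have hii : IntervalIntegrable (fun l : ℝ => l ^ (p-2) * (a - l)) volume 0 a := by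
      apply IntervalIntegrable.mul_continuousOn
      · exact intervalIntegral.intervalIntegrable_rpow' (by linarith)
      · exact (continuous_const.sub continuous_id).continuousOn
    have hint : IntegrableOn (fun l : ℝ => l ^ (p-2) * (a - l)) (Ioc 0 a) := by
      rw [← intervalIntegrable_iff_integrableOn_Ioc_of_le ha]
      exact hii
    have hnn : 0 ≤ᵐ[volume.restrict (Ioc (0:ℝ) a)] (fun l : ℝ => l ^ (p-2) * (a - l)) := by
      filter_upwards [ae_restrict_mem measurableSet_Ioc] with l hl
      have h1 := Real.rpow_nonneg hl.1.le (p-2)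
      have h2 := hl.2
      simp only [Pi.zero_apply]
      nlinarith
    have hval : ∫ l in (0:ℝ)..a, l ^ (p-2) * (a - l) = a ^ p / ((p-1)*p) := by
      have hcg : ∀ l ∈ uIcc (0:ℝ) a, l ^ (p-2) * (a - l) = a * l ^ (p-2) - l ^ (p-1) := by
        intro l hl
        rcases eq_or_lt_of_le ((uIcc_of_le ha).subset hl).1 with rfl | hl0
        · rcases eq_or_ne p 2 with rfl | hp2
          · norm_num
          · rw [Real.zero_rpow (by intro h; apply hp2; linarith : p - 2 ≠ 0),
              Real.zero_rpow (by intro h; linarith : p - 1 ≠ 0)]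
            ring
        · rw [show l ^ (p-1) = l ^ (p-2) * l by
            rw [← Real.rpow_add_one (ne_of_gt hl0), show p - 2 + 1 = p - 1 by ring]]
          ring
      rw [intervalIntegral.integral_congr hcg,
        intervalIntegral.integral_sub ((intervalIntegral.intervalIntegrable_rpow'
          (by linarith : (-1:ℝ) < p - 2)).const_mul a)
          (intervalIntegral.intervalIntegrable_rpow' (by linarith : (-1:ℝ) < p - 1)),
        intervalIntegral.integral_const_mul, integral_rpow (Or.inl (by linarith)),
        integral_rpow (Or.inl (by linarith))]
      rw [Real.zero_rpow (by intro h; linarith : p - 2 + 1 ≠ 0),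
        Real.zero_rpow (by intro h; linarith : p - 1 + 1 ≠ 0)]
      have e1 : p - 2 + 1 = p - 1 := by ring
      have e2 : p - 1 + 1 = p := by ring
      rw [e1, e2]
      have e3 : a * a ^ (p-1) = a ^ p := by
        rw [← Real.rpow_one_add' (le_of_lt ha0) (by linarith)]
        norm_num
      have hp1 : p - 1 ≠ 0 := by intro h; linarith
      have hp0 : p ≠ 0 := by intro h; linarith
      rw [sub_zero, sub_zero, ← mul_div_assoc, e3]
      field_simp
      ring
    rw [hsplit, lintegral_union measurableSet_Ioi (Set.Ioc_disjoint_Ioi le_rfl), htail, add_zero,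
      setLIntegral_congr_fun measurableSet_Ioc hcong,
      ← ofReal_integral_eq_lintegral_ofReal hint hnn,
      ← intervalIntegral.integral_of_le ha, hval]

section
variable {φ : ℝ → ℝ} {φtop : ℝ} {φ' : ℝ → ℝ}

lemma master (hc : ContinuousOn φ (Set.Ici 0))
    (htop : Filter.Tendsto φ Filter.atTop (nhds φtop))
    (hconv : ConvexOn ℝ (Set.Ioi 0) φ)
    (hφ' : ∀ t ∈ Set.Ioi (0 : ℝ), φ' t = derivWithin φ (Set.Ioi t) t)
    {p : ℝ} (hp : 1 < p) :
    ∫⁻ x in Set.Ioi (0 : ℝ), ENNReal.ofReal ((-φ' x) ^ p)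
      = ENNReal.ofReal ((p - 1) * p) *
        ∫⁻ lam in Set.Ioi (0 : ℝ), ENNReal.ofReal (lam ^ (p - 2) * (-legendreStar φ lam)) := by
  have hmeas : AEMeasurable φ' (volume.restrict (Ioi 0)) :=
    aemeasurable_restrict_of_monotoneOn measurableSet_Ioi (rderiv_mono hconv hφ')
  set g : ℝ → ℝ := hmeas.mk φ' with hg_def
  have hg : Measurable g := hmeas.measurable_mk
  have hgae : φ' =ᵐ[volume.restrict (Ioi 0)] g := hmeas.ae_eq_mk
  set c : ℝ≥0∞ := ENNReal.ofReal ((p - 1) * p) with hc_def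
  have hcpos : (0:ℝ) < (p - 1) * p := by nlinarith
  have hc0 : c ≠ 0 := by simp [hc_def, ENNReal.ofReal_eq_zero, not_le, hcpos]
  have hcT : c ≠ ⊤ := ENNReal.ofReal_ne_top
  -- rewrite RHS integrand
  have hR : ∫⁻ lam in Set.Ioi (0 : ℝ), ENNReal.ofReal (lam ^ (p - 2) * (-legendreStar φ lam))
      = ∫⁻ lam in Set.Ioi (0:ℝ), ∫⁻ t in Set.Ioi (0:ℝ),
          ENNReal.ofReal (lam ^ (p-2)) * ENNReal.ofReal (-g t - lam) := by
    apply lintegral_congr_ae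
    filter_upwards [ae_restrict_mem measurableSet_Ioi] with lam hlam
    rw [ENNReal.ofReal_mul (Real.rpow_nonneg (le_of_lt hlam) _),
      legendre_rep hc hconv htop hφ' hlam]
    rw [show (∫⁻ t in Ioi (0:ℝ), ENNReal.ofReal (-φ' t - lam))
        = ∫⁻ t in Ioi (0:ℝ), ENNReal.ofReal (-g t - lam) from
      lintegral_congr_ae (hgae.mono fun t ht => by show ENNReal.ofReal _ = ENNReal.ofReal _; rw [ht])]
    rw [← lintegral_const_mul' _ _ ENNReal.ofReal_ne_top]
  have hFmeas : Measurable (Function.uncurry fun lam t =>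
      ENNReal.ofReal (lam ^ (p-2)) * ENNReal.ofReal (-g t - lam)) := by
    refine Measurable.mul (f := fun q : ℝ × ℝ => ENNReal.ofReal (q.1 ^ (p-2)))
      (g := fun q : ℝ × ℝ => ENNReal.ofReal (-g q.2 - q.1)) ?_ ?_
    · exact ENNReal.measurable_ofReal.comp ((measurable_fst).pow_const (p-2))
    · exact ENNReal.measurable_ofReal.comp (((hg.comp measurable_snd).neg).sub measurable_fst)
  have hswap : (∫⁻ lam in Set.Ioi (0:ℝ), ∫⁻ t in Set.Ioi (0:ℝ),
        ENNReal.ofReal (lam ^ (p-2)) * ENNReal.ofReal (-g t - lam))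
      = ∫⁻ t in Set.Ioi (0:ℝ), ∫⁻ lam in Set.Ioi (0:ℝ),
        ENNReal.ofReal (lam ^ (p-2)) * ENNReal.ofReal (-g t - lam) :=
    lintegral_lintegral_swap hFmeas.aemeasurable
  have hgle : ∀ᵐ t ∂(volume.restrict (Ioi (0:ℝ))), 0 ≤ -g t := by
    filter_upwards [hgae, ae_restrict_mem measurableSet_Ioi] with t ht hmem
    rw [← ht]
    linarith [rderiv_nonpos hconv htop hφ' (mem_Ioi.1 hmem)]
  have hinner : (∫⁻ t in Set.Ioi (0:ℝ), ∫⁻ lam in Set.Ioi (0:ℝ),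
        ENNReal.ofReal (lam ^ (p-2)) * ENNReal.ofReal (-g t - lam))
      = ∫⁻ t in Set.Ioi (0:ℝ), ENNReal.ofReal ((-g t) ^ p) / c := by
    apply lintegral_congr_ae
    filter_upwards [hgle] with t hgt
    rw [lemK hp hgt, ENNReal.ofReal_div_of_pos hcpos]
  have hL : ∫⁻ x in Set.Ioi (0 : ℝ), ENNReal.ofReal ((-φ' x) ^ p)
      = ∫⁻ x in Set.Ioi (0:ℝ), ENNReal.ofReal ((-g x) ^ p) :=
    lintegral_congr_ae (hgae.mono fun t ht => by show ENNReal.ofReal _ = ENNReal.ofReal _; rw [ht])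
  rw [hL, hR, hswap, hinner]
  rw [show (fun t => ENNReal.ofReal ((-g t) ^ p) / c)
      = fun t => ENNReal.ofReal ((-g t) ^ p) * c⁻¹ from funext fun t => by
    rw [ENNReal.div_eq_inv_mul, mul_comm]]
  rw [lintegral_mul_const' _ _ (by simpa using hc0)]
  rw [← div_eq_mul_inv, ENNReal.mul_div_cancel hc0 hcT]


/-- Let `φ` be continuous on `[0,∞]` (continuity on `[0,∞)` plus a finite
limit `φtop` at `∞`) and convex on `(0,∞)`, with right derivative `φ'`. Then for any real
`p > 1`, `∫_0^∞ (−φ'(x))^p dx = −(p−1)p ∫_0^∞ λ^{p−2} φ*(λ) dλ`, and in particular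
`∫_0^∞ φ'(x)^2 dx = −2∫_0^∞ φ*(λ) dλ`. -/
theorem integral_rpow_rightDeriv_eq_legendre
    (φ : ℝ → ℝ) (φtop : ℝ)
    (hc : ContinuousOn φ (Set.Ici 0))
    (htop : Filter.Tendsto φ Filter.atTop (nhds φtop))
    (hconv : ConvexOn ℝ (Set.Ioi 0) φ)
    (φ' : ℝ → ℝ) (hφ' : ∀ t ∈ Set.Ioi (0 : ℝ), φ' t = derivWithin φ (Set.Ioi t) t)
    (p : ℝ) (hp : 1 < p) :
    (∫⁻ x in Set.Ioi (0 : ℝ), ENNReal.ofReal ((-φ' x) ^ p)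
        = ENNReal.ofReal ((p - 1) * p) *
          ∫⁻ lam in Set.Ioi (0 : ℝ), ENNReal.ofReal (lam ^ (p - 2) * (-legendreStar φ lam))) ∧
    (∫⁻ x in Set.Ioi (0 : ℝ), ENNReal.ofReal ((φ' x) ^ 2)
        = 2 * ∫⁻ lam in Set.Ioi (0 : ℝ), ENNReal.ofReal (-legendreStar φ lam)) := by
  constructor
  · exact master hc htop hconv hφ' hp
  · have h2 := master hc htop hconv hφ' (p := 2) one_lt_two
    have hL : ∫⁻ x in Set.Ioi (0:ℝ), ENNReal.ofReal ((φ' x) ^ 2)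
        = ∫⁻ x in Set.Ioi (0:ℝ), ENNReal.ofReal ((-φ' x) ^ (2:ℝ)) := by
      refine lintegral_congr (fun x => ?_)
      congr 1
      rw [show ((2:ℝ)) = ((2:ℕ):ℝ) by norm_num, Real.rpow_natCast, neg_sq]
    have hR : ∫⁻ lam in Set.Ioi (0:ℝ), ENNReal.ofReal (lam ^ ((2:ℝ) - 2) * (-legendreStar φ lam))
        = ∫⁻ lam in Set.Ioi (0:ℝ), ENNReal.ofReal (-legendreStar φ lam) := by
      refine lintegral_congr (fun lam => ?_)
      rw [show (2:ℝ) - 2 = 0 by norm_num, Real.rpow_zero, one_mul]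
    rw [hL, h2, hR]
    norm_num
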